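/- For the anti-Wick quantisation of a symbol depending only on ξ, f(x,ξ) = φ(ξ) with Fourier expansion φ(ξ) = Σ_m φ_m e^{2πi m ξ/ℓ_ξ}, the matrix elements are (Op_N^{AW}(f))_{jk} = Σ_{n∈Z} φ_{k-j+nN} e^{-ℏπ²(k-j+nN)²/ℓ_ξ²}. -/

import Mathlib

set_option maxHeartbeats 1000000

noncomputable section
open Complex Real MeasureTheory

lemma summable_exp_quad (a b : ℝ) (ha : 0 < a) :
    Summable fun n : ℤ => Real.exp (-a * (n : ℝ)^2 + b * |(n:ℝ)|) := by
  have h := summable_pow_mul_jacobiTheta₂_term_bound (b/(2*π)) (T := a/π) (by positivity) 0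
  refine h.congr fun n => ?_
  have hπ : (π:ℝ) ≠ 0 := Real.pi_ne_zero
  rw [pow_zero, one_mul]
  congr 1
  push_cast
  field_simp
  ring

lemma summable_gauss_shift (r L u : ℝ) (hr : 0 < r) (hL : 0 < L) :
    Summable fun n : ℤ => Real.exp (-(r * (u - n * L)^2)) := by
  refine Summable.of_nonneg_of_le (fun n => (Real.exp_pos _).le) (fun n => ?_)
    (summable_exp_quad (r*L^2) (2*r*(_root_.abs u)*L) (by positivity))
  rw [Real.exp_le_exp]
  have h2 : (n:ℝ) * u ≤ |(n:ℝ)| * _root_.abs u := (le_abs_self _).trans (le_of_eq (abs_mul _ _))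
  nlinarith [mul_le_mul_of_nonneg_left h2 (by positivity : (0:ℝ) ≤ 2*r*L),
    mul_nonneg hr.le (sq_nonneg u)]

lemma integrable_gauss_two (r α β : ℝ) (hr : 0 < r) :
    Integrable fun x : ℝ => Real.exp (-(r * ((α - x)^2 + (β - x)^2))) := by
  have h : ∀ x : ℝ, Real.exp (-(r * ((α - x)^2 + (β - x)^2)))
      = Real.exp (-(2*r) * (x - (α+β)/2)^2) * Real.exp (-(r * (α-β)^2/2)) := by
    intro x; rw [← Real.exp_add]; congr 1; ring
  refine Integrable.congr ?_ (Filter.Eventually.of_forall fun x => (h x).symm)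
  exact ((integrable_exp_neg_mul_sq (by positivity : (0:ℝ) < 2*r)).comp_sub_right
    ((α+β)/2)).mul_const _

lemma integral_gauss_two (r α β : ℝ) (hr : 0 < r) :
    ∫ x : ℝ, Real.exp (-(r * ((α - x)^2 + (β - x)^2)))
      = Real.sqrt (π/(2*r)) * Real.exp (-(r * (α-β)^2/2)) := by
  calc ∫ x : ℝ, Real.exp (-(r * ((α - x)^2 + (β - x)^2)))
      = ∫ x : ℝ, Real.exp (-(2*r) * (x - (α+β)/2)^2) * Real.exp (-(r * (α-β)^2/2)) := by
        congr 1; funext x; rw [← Real.exp_add]; congr 1; ring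
    _ = (∫ x : ℝ, Real.exp (-(2*r) * x^2)) * Real.exp (-(r * (α-β)^2/2)) := by
        rw [MeasureTheory.integral_mul_const]
        congr 1
        exact integral_sub_right_eq_self (fun y => Real.exp (-(2*r)*y^2)) ((α+β)/2)
    _ = _ := by rw [integral_gaussian]

lemma hasSum_periodize {g : ℝ → ℝ} (hg : Integrable g) {L : ℝ} (hL : 0 < L) :
    HasSum (fun m : ℤ => ∫ x in (0:ℝ)..L, g (x + m * L)) (∫ x : ℝ, g x) := by
  have hG : Integrable fun t : ℝ => g (L * t) := hg.comp_mul_left' hL.ne'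
  have H := hG.hasSum_intervalIntegral_comp_add_int
  have H2 := H.mul_left L
  have hval : L * ∫ t : ℝ, g (L * t) = ∫ x : ℝ, g x := by
    rw [Measure.integral_comp_mul_left g L, smul_eq_mul, abs_inv, abs_of_pos hL]
    field_simp
  rw [hval] at H2
  refine H2.congr_fun fun n => ?_
  refine Eq.symm ?_
  calc L * ∫ t in (0:ℝ)..(1:ℝ), g (L * (t + (n:ℝ)))
      = L * ∫ t in (0:ℝ)..(1:ℝ), (fun y => g (y + n * L)) (L * t) := by
        congr 1; apply intervalIntegral.integral_congr; intro t _; simp only []; ring_nf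
    _ = ∫ y in (L*(0:ℝ))..(L*(1:ℝ)), g (y + n * L) := by
        rw [← intervalIntegral.smul_integral_comp_mul_left (fun y => g (y + n * L)) L]
        simp [smul_eq_mul]
    _ = ∫ y in (0:ℝ)..L, g (y + n * L) := by norm_num

lemma integral_exp_theta (T : ℝ) (hT : 0 < T) (K : ℤ) :
    ∫ ξ in (0:ℝ)..T, Complex.exp ((((2*π*K/T : ℝ)) : ℂ) * Complex.I * ξ)
      = if K = 0 then (T:ℂ) else 0 := by
  rcases eq_or_ne K 0 with h | h
  · simp [h]
  · have hc : (((2*π*K/T : ℝ)) : ℂ) * Complex.I ≠ 0 := by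
      simp only [ne_eq, mul_eq_zero, Complex.I_ne_zero, or_false, Complex.ofReal_eq_zero]
      exact div_ne_zero (mul_ne_zero (mul_ne_zero two_ne_zero Real.pi_ne_zero)
        (Int.cast_ne_zero.2 h)) hT.ne'
    rw [if_neg h, integral_exp_mul_complex hc]
    have hT' : (T:ℂ) ≠ 0 := by exact_mod_cast hT.ne'
    have h1 : (((2*π*K/T : ℝ)) : ℂ) * Complex.I * T = (K:ℂ) * (2*π*Complex.I) := by
      push_cast
      field_simp
    rw [h1, Complex.exp_int_mul_two_pi_mul_I, Complex.ofReal_zero, mul_zero, Complex.exp_zero, sub_self, zero_div]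

lemma gauss_shift_le (r L u C : ℝ) (hr : 0 < r) (hL : 0 ≤ L) (hC : |u| ≤ C) (n : ℤ) :
    Real.exp (-(r * (u - n * L)^2))
      ≤ Real.exp (-(r*L^2) * (n:ℝ)^2 + (2*r*C*L) * |(n:ℝ)|) := by
  rw [Real.exp_le_exp]
  have h3 : (n:ℝ) * u ≤ |(n:ℝ)| * C := by
    calc (n:ℝ)*u ≤ |(n:ℝ)*u| := le_abs_self _
    _ = |(n:ℝ)| * _root_.abs u := abs_mul _ _
    _ ≤ |(n:ℝ)| * C := mul_le_mul_of_nonneg_left hC (abs_nonneg _)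
  nlinarith [mul_le_mul_of_nonneg_left h3 (by positivity : (0:ℝ) ≤ 2*r*L),
    mul_nonneg hr.le (sq_nonneg u)]

def pairShift : ℤ × ℤ ≃ ℤ × ℤ :=
  ⟨fun z => (z.2 + z.1, z.2), fun p => (p.1 - p.2, p.2),
    fun z => by simp, fun p => by simp⟩

/-- The coherent-state projector kernel `P(x,ξ)_{jk}` on the torus. -/
def projKernel (N : ℕ) (ℓx ℏ : ℝ) (j k : ℕ) (x ξ : ℝ) : ℂ :=
  ((Real.sqrt (1 / (π * ℏ)) : ℝ) : ℂ) * ((ℓx / N : ℝ) : ℂ) *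
    ∑' p : ℤ × ℤ,
      Complex.exp ((Complex.I / (ℏ : ℂ)) * (ξ : ℂ) *
          ((((j : ℝ) - k) / N : ℝ) - ((p.1 : ℂ) - (p.2 : ℂ))) * (ℓx : ℂ)) *
        Complex.exp (((-(1 / (2 * ℏ)) * ((j * ℓx / N - p.1 * ℓx - x) ^ 2 +
            (k * ℓx / N - p.2 * ℓx - x) ^ 2) : ℝ) : ℂ))

/-- The anti-Wick matrix element `(Op_N^{AW}(f))_{jk}` for a symbol `f`. -/
def antiWick (N : ℕ) (ℓx ℓξ ℏ : ℝ) (f : ℝ → ℝ → ℂ) (j k : ℕ) : ℂ :=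
  ((1 / (2 * π * ℏ) : ℝ) : ℂ) *
    ∫ x in (0:ℝ)..ℓx, ∫ ξ in (0:ℝ)..ℓξ, f x ξ * projKernel N ℓx ℏ j k x ξ

/-- For a symbol `f(x,ξ) = φ(ξ)` with Fourier coefficients `c`, the anti-Wick matrix
elements are `(Op_N^{AW}(f))_{jk} = Σ_n c_{k-j+nN} e^{-ℏπ²(k-j+nN)²/ℓ_ξ²}`. -/
theorem antiWick_of_xi_only (N : ℕ) (hN : 0 < N) (ℓx ℓξ ℏ : ℝ)
    (hℓx : 0 < ℓx) (hℓξ : 0 < ℓξ) (hℏ : ℏ = ℓx * ℓξ / (2 * π * N))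
    (φ : ℝ → ℂ) (c : ℤ → ℂ) (hc : Summable fun m => ‖c m‖)
    (hφ : ∀ ξ : ℝ, φ ξ = ∑' m : ℤ, c m * Complex.exp (2 * π * I * (m : ℂ) * (ξ : ℂ) / (ℓξ : ℂ)))
    (f : ℝ → ℝ → ℂ) (hf : ∀ x ξ, f x ξ = φ ξ)
    (j k : ℕ) (hj : j < N) (hk : k < N) :
    antiWick N ℓx ℓξ ℏ f j k =
      ∑' n : ℤ, c ((k : ℤ) - j + n * N) *
        ((Real.exp (-(ℏ * π ^ 2 * ((k : ℝ) - j + n * N) ^ 2 / ℓξ ^ 2)) : ℝ) : ℂ) := by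
  have hπ := Real.pi_pos
  have hNr : (0:ℝ) < (N:ℝ) := by exact_mod_cast hN
  have hh : (0:ℝ) < ℏ := by rw [hℏ]; positivity
  have hLT : ℓx * ℓξ = 2 * π * (N:ℝ) * ℏ := by rw [hℏ]; field_simp
  set r : ℝ := 1/(2*ℏ) with hr_def
  have hr : (0:ℝ) < r := by positivity
  -- abbreviations
  set D : ℤ × ℤ → ℝ := fun p => (((j:ℝ) - k)/N - ((p.1:ℝ) - p.2)) * ℓx / ℏ with hD_def
  set gss : ℤ × ℤ → ℝ → ℝ := fun p x =>
    Real.exp (-(1 / (2 * ℏ)) * (((j:ℝ) * ℓx / N - p.1 * ℓx - x) ^ 2 +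
      ((k:ℝ) * ℓx / N - p.2 * ℓx - x) ^ 2)) with hgss_def
  set C0 : ℂ := ((Real.sqrt (1 / (π * ℏ)) : ℝ) : ℂ) * ((ℓx / N : ℝ) : ℂ) with hC0_def
  -- the key arithmetic identity for the phase frequency
  have hD : ∀ p : ℤ × ℤ, D p = 2*π*((j:ℝ) - k - ((p.1:ℝ) - p.2)*N)/ℓξ := by
    intro p
    simp only [hD_def]
    rw [hℏ]
    field_simp
  -- the projector kernel in clean form
  have hproj : ∀ x ξ : ℝ, projKernel N ℓx ℏ j k x ξ
      = C0 * ∑' p : ℤ × ℤ, Complex.exp (((D p * ξ : ℝ) : ℂ) * Complex.I) * ((gss p x : ℝ) : ℂ) := by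
    intro x ξ
    rw [projKernel]
    congr 1
    refine tsum_congr fun p => ?_
    have hhc : (ℏ:ℂ) ≠ 0 := by exact_mod_cast hh.ne'
    congr 1
    · congr 1
      simp only [hD_def]
      push_cast
      field_simp
    · rw [← Complex.ofReal_exp]
  -- summability of the gaussian lattice sum
  have hgs : ∀ x : ℝ, Summable fun p : ℤ × ℤ => gss p x := by
    intro x
    have h1 := summable_gauss_shift (1/(2*ℏ)) ℓx ((j:ℝ)*ℓx/N - x) (by positivity) hℓx
    have h2 := summable_gauss_shift (1/(2*ℏ)) ℓx ((k:ℝ)*ℓx/N - x) (by positivity) hℓx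
    refine (h1.mul_of_nonneg h2 (fun n => (Real.exp_pos _).le)
      (fun n => (Real.exp_pos _).le)).congr fun p => ?_
    simp only [hgss_def, ← Real.exp_add]
    congr 1
    ring
  have hgpos : ∀ (p : ℤ × ℤ) (x : ℝ), 0 < gss p x := by
    intro p x; simp only [hgss_def]; exact Real.exp_pos _
  have hφ' : ∀ ξ : ℝ, φ ξ = ∑' m : ℤ, c m *
      Complex.exp (((2*π*(m:ℝ)*ξ/ℓξ : ℝ) : ℂ) * Complex.I) := by
    intro ξ
    rw [hφ ξ]
    refine tsum_congr fun m => ?_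
    congr 2
    push_cast
    ring
  -- step 1 : the ξ-integral
  have step1 : ∀ x : ℝ, (∫ ξ in (0:ℝ)..ℓξ, f x ξ * projKernel N ℓx ℏ j k x ξ)
      = C0 * (ℓξ:ℂ) * ∑' p : ℤ × ℤ, c ((k:ℤ) - j + (p.1 - p.2) * N) * ((gss p x : ℝ) : ℂ) := by
    intro x
    have hnorm : ∀ (z : (ℤ × ℤ) × ℤ) (ξ : ℝ),
        ‖(Complex.exp (((D z.1 * ξ : ℝ) : ℂ) * Complex.I) * ((gss z.1 x : ℝ) : ℂ)) *
          (c z.2 * Complex.exp (((2*π*((z.2:ℤ):ℝ)*ξ/ℓξ : ℝ) : ℂ) * Complex.I))‖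
          = gss z.1 x * ‖c z.2‖ := by
      intro z ξ
      simp only [norm_mul, Complex.norm_exp_ofReal_mul_I,
        Complex.norm_real, Real.norm_eq_abs, one_mul, mul_one, abs_of_pos (hgpos z.1 x)]
    have hbs : Summable fun z : (ℤ × ℤ) × ℤ => gss z.1 x * ‖c z.2‖ := by
      refine Summable.mul_of_nonneg (hgs x) hc (fun p => (hgpos p x).le)
        (fun m => norm_nonneg (c m))
    have hsummable : ∀ ξ : ℝ, Summable fun z : (ℤ × ℤ) × ℤ =>
        (Complex.exp (((D z.1 * ξ : ℝ) : ℂ) * Complex.I) * ((gss z.1 x : ℝ) : ℂ)) *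
          (c z.2 * Complex.exp (((2*π*((z.2:ℤ):ℝ)*ξ/ℓξ : ℝ) : ℂ) * Complex.I)) := by
      intro ξ
      exact Summable.of_norm ((hbs.congr (fun z => (hnorm z ξ).symm)))
    have hint_eq : ∀ ξ : ℝ, f x ξ * projKernel N ℓx ℏ j k x ξ
        = C0 * ∑' z : (ℤ × ℤ) × ℤ,
            (Complex.exp (((D z.1 * ξ : ℝ) : ℂ) * Complex.I) * ((gss z.1 x : ℝ) : ℂ)) *
              (c z.2 * Complex.exp (((2*π*((z.2:ℤ):ℝ)*ξ/ℓξ : ℝ) : ℂ) * Complex.I)) := by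
      intro ξ
      have hP : Summable fun p : ℤ × ℤ =>
          ‖Complex.exp (((D p * ξ : ℝ) : ℂ) * Complex.I) * ((gss p x : ℝ) : ℂ)‖ := by
        refine (hgs x).congr fun p => Eq.symm ?_
        rw [norm_mul, Complex.norm_exp_ofReal_mul_I,
          Complex.norm_real, Real.norm_eq_abs, one_mul, abs_of_pos (hgpos p x)]
      have hQ : Summable fun m : ℤ =>
          ‖c m * Complex.exp (((2*π*((m:ℤ):ℝ)*ξ/ℓξ : ℝ) : ℂ) * Complex.I)‖ := by
        refine hc.congr fun m => Eq.symm ?_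
        rw [norm_mul, Complex.norm_exp_ofReal_mul_I,
          mul_one]
      rw [hf, hφ' ξ, hproj x ξ, ← tsum_mul_tsum_of_summable_norm hP hQ]
      ring
    have key : HasSum (fun z : (ℤ × ℤ) × ℤ =>
        ∫ ξ in (0:ℝ)..ℓξ,
          (Complex.exp (((D z.1 * ξ : ℝ) : ℂ) * Complex.I) * ((gss z.1 x : ℝ) : ℂ)) *
            (c z.2 * Complex.exp (((2*π*((z.2:ℤ):ℝ)*ξ/ℓξ : ℝ) : ℂ) * Complex.I)))
        (∫ ξ in (0:ℝ)..ℓξ, ∑' z : (ℤ × ℤ) × ℤ,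
          (Complex.exp (((D z.1 * ξ : ℝ) : ℂ) * Complex.I) * ((gss z.1 x : ℝ) : ℂ)) *
            (c z.2 * Complex.exp (((2*π*((z.2:ℤ):ℝ)*ξ/ℓξ : ℝ) : ℂ) * Complex.I))) := by
      apply intervalIntegral.hasSum_integral_of_dominated_convergence
        (bound := fun z _ => gss z.1 x * ‖c z.2‖)
      · intro z
        apply Continuous.aestronglyMeasurable
        fun_prop
      · intro z
        filter_upwards with ξ _
        exact le_of_eq (hnorm z ξ)
      · filter_upwards with ξ _
        exact hbs
      · exact intervalIntegrable_const
      · filter_upwards with ξ _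
        exact (hsummable ξ).hasSum
    have hterm : ∀ z : (ℤ × ℤ) × ℤ,
        (∫ ξ in (0:ℝ)..ℓξ,
          (Complex.exp (((D z.1 * ξ : ℝ) : ℂ) * Complex.I) * ((gss z.1 x : ℝ) : ℂ)) *
            (c z.2 * Complex.exp (((2*π*((z.2:ℤ):ℝ)*ξ/ℓξ : ℝ) : ℂ) * Complex.I)))
          = c z.2 * ((gss z.1 x : ℝ) : ℂ) *
              (if z.2 + (j:ℤ) - k - (z.1.1 - z.1.2) * N = 0 then (ℓξ:ℂ) else 0) := by
      intro z
      have h1 : ∀ ξ : ℝ,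
          (Complex.exp (((D z.1 * ξ : ℝ) : ℂ) * Complex.I) * ((gss z.1 x : ℝ) : ℂ)) *
            (c z.2 * Complex.exp (((2*π*((z.2:ℤ):ℝ)*ξ/ℓξ : ℝ) : ℂ) * Complex.I))
          = (c z.2 * ((gss z.1 x : ℝ) : ℂ)) *
              Complex.exp ((((2*π*((z.2 + (j:ℤ) - k - (z.1.1 - z.1.2) * N : ℤ)):ℝ)/ℓξ : ℝ) : ℂ)
                * Complex.I * ξ) := by
        intro ξ
        have harg : (((D z.1 * ξ : ℝ) : ℂ) * Complex.I) + (((2*π*((z.2:ℤ):ℝ)*ξ/ℓξ : ℝ) : ℂ) * Complex.I)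
            = (((2*π*((z.2 + (j:ℤ) - k - (z.1.1 - z.1.2) * N : ℤ)):ℝ)/ℓξ : ℝ) : ℂ)
                * Complex.I * ξ := by
          rw [hD z.1]
          push_cast
          ring
        rw [show (Complex.exp (((D z.1 * ξ : ℝ) : ℂ) * Complex.I) * ((gss z.1 x : ℝ) : ℂ)) *
            (c z.2 * Complex.exp (((2*π*((z.2:ℤ):ℝ)*ξ/ℓξ : ℝ) : ℂ) * Complex.I))
            = (c z.2 * ((gss z.1 x : ℝ) : ℂ)) *
              (Complex.exp (((D z.1 * ξ : ℝ) : ℂ) * Complex.I) *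
               Complex.exp (((2*π*((z.2:ℤ):ℝ)*ξ/ℓξ : ℝ) : ℂ) * Complex.I)) from by ring,
          ← Complex.exp_add, harg]
      rw [intervalIntegral.integral_congr (fun ξ _ => h1 ξ),
        intervalIntegral.integral_const_mul,
        integral_exp_theta ℓξ hℓξ (z.2 + (j:ℤ) - k - (z.1.1 - z.1.2) * N)]
    rw [intervalIntegral.integral_congr (fun ξ (_ : ξ ∈ _) => hint_eq ξ),
      intervalIntegral.integral_const_mul, ← key.tsum_eq, tsum_congr hterm,
      Summable.tsum_prod' (key.summable.congr hterm) (fun p => (key.summable.congr hterm).prod_factor p)]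
    have hinner : ∀ p : ℤ × ℤ,
        (∑' m : ℤ, c m * ((gss p x : ℝ) : ℂ) *
          (if m + (j:ℤ) - k - (p.1 - p.2) * N = 0 then (ℓξ:ℂ) else 0))
        = (ℓξ:ℂ) * (c ((k:ℤ) - j + (p.1 - p.2) * N) * ((gss p x : ℝ) : ℂ)) := by
      intro p
      rw [tsum_eq_single ((k:ℤ) - j + (p.1 - p.2) * N)
        (fun m hm => by rw [if_neg (fun h => hm (by linear_combination h)), mul_zero])]
      rw [if_pos (by ring)]
      ring
    rw [tsum_congr hinner, tsum_mul_left]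
    ring
  -- step 2 : the x-integral
  have step2 : (∫ x in (0:ℝ)..ℓx, ∑' p : ℤ × ℤ, c ((k:ℤ) - j + (p.1 - p.2) * N) * ((gss p x : ℝ) : ℂ))
      = ∑' q : ℤ, c ((k:ℤ) - j + q * N) *
          ((Real.sqrt (π/(2*r)) * Real.exp (-(r * ((((j:ℝ)*ℓx/N - q*ℓx) - (k:ℝ)*ℓx/N)^2)/2)) : ℝ) : ℂ) := by
    set G : ℤ → ℝ → ℝ := fun q y =>
      Real.exp (-(r * ((((j:ℝ)*ℓx/N - q*ℓx) - y)^2 + ((k:ℝ)*ℓx/N - y)^2))) with hG_def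
    have hGg : ∀ (q m : ℤ) (x : ℝ), gss (m + q, m) x = G q (x + m*ℓx) := by
      intro q m x
      simp only [hgss_def, hG_def, hr_def]
      congr 1
      push_cast
      ring
    have hGpos : ∀ (q : ℤ) (y : ℝ), 0 < G q y := fun q y => Real.exp_pos _
    have hGint : ∀ q : ℤ, Integrable (G q) :=
      fun q => integrable_gauss_two r ((j:ℝ)*ℓx/N - q*ℓx) ((k:ℝ)*ℓx/N) hr
    have hGsum : ∀ q : ℤ, HasSum (fun m : ℤ => ∫ x in (0:ℝ)..ℓx, G q (x + m*ℓx))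
        (∫ y : ℝ, G q y) := fun q => hasSum_periodize (hGint q) hℓx
    have hcc : Summable fun q : ℤ => ‖c ((k:ℤ) - j + q * N)‖ := by
      have hinj : Function.Injective (fun q : ℤ => (k:ℤ) - j + q * N) := by
        intro a b hab
        simp only at hab
        have h2 := add_left_cancel hab
        exact mul_right_cancel₀ (by exact_mod_cast hN.ne' : (N:ℤ) ≠ 0) h2
      exact hc.comp_injective hinj
    have hbs2 : Summable fun z : ℤ × ℤ => ‖c ((k:ℤ) - j + z.1 * N)‖ *
        Real.exp (-(r*ℓx^2) * (z.2:ℝ)^2 + (2*r*(2*ℓx)*ℓx) * |(z.2:ℝ)|) := by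
      refine Summable.mul_of_nonneg hcc
        (summable_exp_quad (r*ℓx^2) (2*r*(2*ℓx)*ℓx) (by positivity))
        (fun q => norm_nonneg _) (fun m => (Real.exp_pos _).le)
    have hGle : ∀ (q m : ℤ) (x : ℝ), x ∈ Set.uIoc (0:ℝ) ℓx →
        G q (x + m*ℓx) ≤ Real.exp (-(r*ℓx^2) * (m:ℝ)^2 + (2*r*(2*ℓx)*ℓx) * |(m:ℝ)|) := by
      intro q m x hx
      rw [Set.uIoc_of_le hℓx.le] at hx
      have hkN : (k:ℝ) ≤ N := by exact_mod_cast hk.le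
      have hu : |(k:ℝ)*ℓx/N - x| ≤ 2*ℓx := by
        have h1 : (0:ℝ) ≤ (k:ℝ)*ℓx/N := by positivity
        have h2 : (k:ℝ)*ℓx/N ≤ ℓx := by
          rw [div_le_iff₀ hNr]
          nlinarith
        rw [abs_le]
        constructor <;> nlinarith [hx.1, hx.2]
      calc G q (x + m*ℓx)
          ≤ Real.exp (-(r * (((k:ℝ)*ℓx/N - x) - m * ℓx)^2)) := by
            rw [hG_def]
            simp only []
            rw [Real.exp_le_exp]
            nlinarith [sq_nonneg (((j:ℝ)*ℓx/N - q*ℓx) - (x + m*ℓx)), hr.le,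
              sq_nonneg ((k:ℝ)*ℓx/N - (x + m*ℓx))]
        _ ≤ _ := gauss_shift_le r ℓx _ (2*ℓx) hr hℓx.le hu m
    have hnorm2 : ∀ (z : ℤ × ℤ) (x : ℝ),
        ‖c ((k:ℤ) - j + z.1 * N) * ((G z.1 (x + z.2*ℓx) : ℝ) : ℂ)‖
          = ‖c ((k:ℤ) - j + z.1 * N)‖ * G z.1 (x + z.2*ℓx) := by
      intro z x
      rw [norm_mul, Complex.norm_real, Real.norm_eq_abs,
        abs_of_pos (hGpos z.1 _)]
    have hsum2 : ∀ x : ℝ, x ∈ Set.uIoc (0:ℝ) ℓx → Summable fun z : ℤ × ℤ =>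
        c ((k:ℤ) - j + z.1 * N) * ((G z.1 (x + z.2*ℓx) : ℝ) : ℂ) := by
      intro x hx
      apply Summable.of_norm
      refine Summable.of_nonneg_of_le (fun z => norm_nonneg _) (fun z => ?_) hbs2
      rw [hnorm2]
      exact mul_le_mul_of_nonneg_left (hGle z.1 z.2 x hx) (norm_nonneg _)
    have key2 : HasSum (fun z : ℤ × ℤ =>
        ∫ x in (0:ℝ)..ℓx, c ((k:ℤ) - j + z.1 * N) * ((G z.1 (x + z.2*ℓx) : ℝ) : ℂ))
        (∫ x in (0:ℝ)..ℓx, ∑' z : ℤ × ℤ,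
          c ((k:ℤ) - j + z.1 * N) * ((G z.1 (x + z.2*ℓx) : ℝ) : ℂ)) := by
      apply intervalIntegral.hasSum_integral_of_dominated_convergence
        (bound := fun z _ => ‖c ((k:ℤ) - j + z.1 * N)‖ *
          Real.exp (-(r*ℓx^2) * (z.2:ℝ)^2 + (2*r*(2*ℓx)*ℓx) * |(z.2:ℝ)|))
      · intro z
        apply Continuous.aestronglyMeasurable
        fun_prop
      · intro z
        filter_upwards with x hx
        rw [hnorm2]
        exact mul_le_mul_of_nonneg_left (hGle z.1 z.2 x hx) (norm_nonneg _)
      · filter_upwards with x _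
        exact hbs2
      · exact intervalIntegrable_const
      · filter_upwards with x hx
        exact (hsum2 x hx).hasSum
    have hSx : ∀ x : ℝ, (∑' p : ℤ × ℤ, c ((k:ℤ) - j + (p.1 - p.2) * N) * ((gss p x : ℝ) : ℂ))
        = ∑' z : ℤ × ℤ, c ((k:ℤ) - j + z.1 * N) * ((G z.1 (x + z.2*ℓx) : ℝ) : ℂ) := by
      intro x
      rw [← Equiv.tsum_eq pairShift
        (fun p : ℤ × ℤ => c ((k:ℤ) - j + (p.1 - p.2) * N) * ((gss p x : ℝ) : ℂ))]
      refine tsum_congr fun z => ?_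
      simp only [pairShift, Equiv.coe_fn_mk, add_sub_cancel_left]
      rw [hGg z.1 z.2 x]
    rw [intervalIntegral.integral_congr (fun x (_ : x ∈ _) => hSx x), ← key2.tsum_eq,
      Summable.tsum_prod' key2.summable (fun q => key2.summable.prod_factor q)]
    refine tsum_congr fun q => ?_
    have hint : ∀ m : ℤ, (∫ x in (0:ℝ)..ℓx, c ((k:ℤ) - j + q * N) * ((G q (x + m*ℓx) : ℝ) : ℂ))
        = c ((k:ℤ) - j + q * N) * (((∫ x in (0:ℝ)..ℓx, G q (x + m*ℓx)) : ℝ) : ℂ) := by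
      intro m
      rw [intervalIntegral.integral_const_mul, intervalIntegral.integral_ofReal]
    rw [tsum_congr hint, tsum_mul_left, ← Complex.ofReal_tsum, (hGsum q).tsum_eq,
      integral_gauss_two r ((j:ℝ)*ℓx/N - q*ℓx) ((k:ℝ)*ℓx/N) hr]
  -- assembly
  have hinner : (∫ x in (0:ℝ)..ℓx, ∫ ξ in (0:ℝ)..ℓξ, f x ξ * projKernel N ℓx ℏ j k x ξ)
      = C0 * (ℓξ:ℂ) *
        ∫ x in (0:ℝ)..ℓx, ∑' p : ℤ × ℤ, c ((k:ℤ) - j + (p.1 - p.2) * N) * ((gss p x : ℝ) : ℂ) := by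
    rw [← intervalIntegral.integral_const_mul]
    exact intervalIntegral.integral_congr fun x _ => step1 x
  have h2 : ∀ q : ℤ, r * ((((j:ℝ)*ℓx/N - q*ℓx) - (k:ℝ)*ℓx/N)^2)/2
      = ℏ * π^2 * ((k:ℝ) - j + q*N)^2 / ℓξ^2 := by
    intro q
    have hsq : (ℓx*ℓξ)^2 = (2*π*(N:ℝ)*ℏ)^2 := by rw [hLT]
    have hA : ((((j:ℝ)*ℓx/N - q*ℓx) - (k:ℝ)*ℓx/N)^2)
        = (ℓx/N)^2 * ((k:ℝ) - j + q*N)^2 := by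
      field_simp
      ring
    rw [hr_def, hA]
    field_simp
    linear_combination ((k:ℝ) - j + q*N)^2 * hsq
  have hterm3 : ∀ q : ℤ, c ((k:ℤ) - j + q*N) *
        ((Real.sqrt (π/(2*r)) * Real.exp (-(r * ((((j:ℝ)*ℓx/N - q*ℓx) - (k:ℝ)*ℓx/N)^2)/2)) : ℝ):ℂ)
      = ((Real.sqrt (π*ℏ) : ℝ):ℂ) * (c ((k:ℤ) - j + q*N) *
          ((Real.exp (-(ℏ * π^2 * ((k:ℝ) - j + q*N)^2 / ℓξ^2)) : ℝ):ℂ)) := by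
    intro q
    rw [h2 q, show π/(2*r) = π*ℏ from by rw [hr_def]; field_simp; try ring, Complex.ofReal_mul]
    ring
  rw [antiWick, hinner, step2, tsum_congr hterm3, tsum_mul_left, hC0_def]
  have hprod : (1/(2*π*ℏ)) * (Real.sqrt (1/(π*ℏ)) * (ℓx/(N:ℝ))) * (ℓξ * Real.sqrt (π*ℏ)) = 1 := by
    have hs : Real.sqrt (1/(π*ℏ)) * Real.sqrt (π*ℏ) = 1 := by
      rw [← Real.sqrt_mul (by positivity), one_div, inv_mul_cancel₀ (by positivity),
        Real.sqrt_one]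
    calc (1/(2*π*ℏ)) * (Real.sqrt (1/(π*ℏ)) * (ℓx/(N:ℝ))) * (ℓξ * Real.sqrt (π*ℏ))
        = (Real.sqrt (1/(π*ℏ)) * Real.sqrt (π*ℏ)) * ((ℓx*ℓξ) / (2*π*(N:ℝ)*ℏ)) := by ring
      _ = 1 := by rw [hs, hLT, one_mul, div_self (by positivity)]
  have hfin : ∀ S : ℂ, (((1 / (2 * π * ℏ) : ℝ)) : ℂ) *
      ((((Real.sqrt (1/(π*ℏ)) : ℝ):ℂ) * (((ℓx/(N:ℝ)) : ℝ):ℂ)) * (ℓξ:ℂ) *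
        ((((Real.sqrt (π*ℏ)) : ℝ):ℂ) * S)) = S := by
    intro S
    calc (((1 / (2 * π * ℏ) : ℝ)) : ℂ) *
        ((((Real.sqrt (1/(π*ℏ)) : ℝ):ℂ) * (((ℓx/(N:ℝ)) : ℝ):ℂ)) * (ℓξ:ℂ) *
          ((((Real.sqrt (π*ℏ)) : ℝ):ℂ) * S))
        = ((((1/(2*π*ℏ)) * (Real.sqrt (1/(π*ℏ)) * (ℓx/(N:ℝ))) * (ℓξ * Real.sqrt (π*ℏ)) : ℝ)) : ℂ)
            * S := by push_cast; ring
      _ = S := by rw [hprod]; simp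
  exact hfin _
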